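/- Let V be a 3-dimensional vector space over a field k of characteristic ≠ 2, q ∈ k nonzero, a, b ∈ V, g a symmetric bilinear form on V with (q−1)² = −4(g(a,a)g(b,b) − g(a,b)²), T the operator Tv = g(b,v)a − g(a,v)b, and Y : V⊗V → V⊗V defined by Y(x⊗y) = g(x,y)(a⊗b − b⊗a) + (x⊗Ty − Ty⊗x) + (y⊗Tx − Tx⊗y) + ((q+1)/2)(x⊗y − y⊗x). Then Y(w) = (q+1)w for every alternating tensor w ∈ V⊗V (i.e., for w = x⊗y − y⊗x), and the image of Y is contained in the space of alternating 2-tensors. -/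

import Mathlib

open Module TensorProduct

theorem stmt13 (k V : Type*) [Field k] [AddCommGroup V] [Module k V]
    [FiniteDimensional k V] (hdim : finrank k V = 3) (hchar : (2 : k) ≠ 0)
    (q : k) (hq : q ≠ 0) (a b : V)
    (g : LinearMap.BilinForm k V) (hg : g.IsSymm)
    (hΔ : (q - 1) ^ 2 = -(4 * (g a a * g b b - g a b ^ 2)))
    (T : V →ₗ[k] V) (hT : ∀ v, T v = g b v • a - g a v • b)
    (Y : V ⊗[k] V →ₗ[k] V ⊗[k] V)
    (hY : ∀ x y : V, Y (x ⊗ₜ y) =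
      g x y • (a ⊗ₜ b - b ⊗ₜ a) + (x ⊗ₜ T y - T y ⊗ₜ x)
        + (y ⊗ₜ T x - T x ⊗ₜ y) + ((q + 1) / 2) • (x ⊗ₜ y - y ⊗ₜ x)) :
    (∀ x y : V, Y (x ⊗ₜ y - y ⊗ₜ x) = (q + 1) • (x ⊗ₜ y - y ⊗ₜ x)) ∧
    LinearMap.range Y ≤ Submodule.span k
      {w : V ⊗[k] V | ∃ x y : V, w = x ⊗ₜ y - y ⊗ₜ x} := by
  constructor
  · intro x y
    have hgs : g x y = g y x := hg.eq x y
    rw [map_sub, hY, hY, hgs]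
    match_scalars <;> field_simp <;> ring
  · rintro _ ⟨t, rfl⟩
    induction t using TensorProduct.induction_on with
    | zero => rw [map_zero]; exact Submodule.zero_mem _
    | tmul x y =>
      rw [hY]
      refine add_mem (add_mem (add_mem ?_ ?_) ?_) ?_
      · exact Submodule.smul_mem _ _ (Submodule.subset_span ⟨a, b, rfl⟩)
      · exact Submodule.subset_span ⟨x, T y, rfl⟩
      · exact Submodule.subset_span ⟨y, T x, rfl⟩
      · exact Submodule.smul_mem _ _ (Submodule.subset_span ⟨x, y, rfl⟩)
    | add u v hu hv => rw [map_add]; exact add_mem hu hv
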